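/- Let G_H be a group of reflections about a single hyperplane H = ker l_H in an n-dimensional space V, with K_H the kernel of det on G_H and b = b_H the dimension of the transvection root space. Choose a basis v₁,...,vₙ of V with v₁,...,v_{n−1} a basis of H, v₁,...,v_b independent transvection root vectors in K_H, and vₙ ∉ H with l_H(vₙ) = 1, and let z₁,...,zₙ be the dual basis of V*. If μ = Σ_I u_I dz_I is a differential form invariant under K_H and J is an index set with J ∩ {1,...,b} ≠ ∅ and n ∉ J, then l_H divides the coefficient u_J. -/

import Mathlib

open MvPolynomial

abbrev GLn (F : Type*) [Field F] (n : ℕ) := (Fin n → F) ≃ₗ[F] (Fin n → F)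

variable {F : Type*} [Field F] {n : ℕ}

/-- Matrix of the contragredient action of `g` on the coordinate functions:
`g · z_i = ∑ j (actMat g i j) z_j`. -/
noncomputable def actMat (g : GLn F n) : Matrix (Fin n) (Fin n) F :=
  Matrix.of fun i j => g.symm (Pi.single j 1) i

/-- Action of `g ∈ GL(V)` on polynomials `F[V]` (contragredient action). -/
noncomputable def polyAct (g : GLn F n) : MvPolynomial (Fin n) F →ₐ[F] MvPolynomial (Fin n) F :=
  aeval fun i => ∑ j, C (actMat g i j) * X j

/-- The degree-one polynomial corresponding to a linear form on `V`. -/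
noncomputable def linToPoly (z : (Fin n → F) →ₗ[F] F) : MvPolynomial (Fin n) F :=
  ∑ j, C (z (Pi.single j 1)) * X j

/-- The invariant ring `F[V]^G` as a subalgebra of `F[V]`. -/
noncomputable def invSub (G : Subgroup (GLn F n)) : Subalgebra F (MvPolynomial (Fin n) F) where
  carrier := {f | ∀ g ∈ G, polyAct g f = f}
  add_mem' := fun {a b} ha hb g hg => by rw [map_add, ha g hg, hb g hg]
  mul_mem' := fun {a b} ha hb g hg => by rw [map_mul, ha g hg, hb g hg]
  algebraMap_mem' := fun r g hg => (polyAct g).commutes r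

/-- Action of `g` on a differential 1-form `ω = ∑ i (w i) dz_i`; the result is the
coefficient vector of `g · ω`. -/
noncomputable def oneFormAct (g : GLn F n) (w : Fin n → MvPolynomial (Fin n) F) :
    Fin n → MvPolynomial (Fin n) F :=
  fun j => ∑ i, polyAct g (w i) * C (actMat g i j)

/-- The coefficient of `dz_J` in `g · dz_I` (a minor determinant of `actMat g`). -/
noncomputable def minorDet (g : GLn F n) (I J : Finset (Fin n)) : F :=
  if h : J.card = I.card then
    Matrix.det (Matrix.of fun a b : Fin I.card =>
      actMat g (I.orderIsoOfFin rfl a) (J.orderIsoOfFin h b))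
  else 0

/-- Action of `g` on a differential form `μ = ∑_I u_I dz_I`, given by its coefficient
function `u : Finset (Fin n) → F[V]`. -/
noncomputable def formAct (g : GLn F n) (u : Finset (Fin n) → MvPolynomial (Fin n) F) :
    Finset (Fin n) → MvPolynomial (Fin n) F :=
  fun J => ∑ I : Finset (Fin n), polyAct g (u I) * C (minorDet g I J)

/-- The sign arising when wedging `dz_I ∧ dz_J` into `dz_(I ∪ J)` for disjoint `I`, `J`. -/
def wsign (I J : Finset (Fin n)) : ℤ :=
  (-1) ^ ((I ×ˢ J).filter fun p => p.2 < p.1).card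

/-- Wedge product of differential forms in terms of coefficient functions. -/
noncomputable def wedgeF (u v : Finset (Fin n) → MvPolynomial (Fin n) F) :
    Finset (Fin n) → MvPolynomial (Fin n) F :=
  fun K => ∑ I ∈ K.powerset, wsign I (K \ I) • (u I * v (K \ I))

/-- The constant 0-form `1`. -/
noncomputable def unitForm : Finset (Fin n) → MvPolynomial (Fin n) F :=
  fun S => if S = ∅ then 1 else 0

/-- Iterated wedge product of a list of forms. -/
noncomputable def iterWedge (L : List (Finset (Fin n) → MvPolynomial (Fin n) F)) :
    Finset (Fin n) → MvPolynomial (Fin n) F :=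
  L.foldr wedgeF unitForm

/-- A 1-form, viewed as a differential form via its coefficient function. -/
noncomputable def oneToForm (w : Fin n → MvPolynomial (Fin n) F) :
    Finset (Fin n) → MvPolynomial (Fin n) F :=
  fun S => if h : S.card = 1 then w (S.min' (Finset.card_pos.mp (by omega))) else 0

/-- The fixed space of `g` in `V`. -/
noncomputable def fixedSpace (g : GLn F n) : Submodule F (Fin n → F) :=
  LinearMap.ker (g.toLinearMap - LinearMap.id)

/-- A reflection: an element of finite order whose fixed space is a hyperplane. -/
def IsReflection (g : GLn F n) : Prop :=
  IsOfFinOrder g ∧ Module.finrank F (fixedSpace g) = n - 1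

/-- A transvection: a (necessarily nondiagonalizable) reflection of determinant one. -/
def IsTransvection (g : GLn F n) : Prop :=
  IsReflection g ∧ LinearMap.det g.toLinearMap = 1 ∧ g ≠ 1

/-- The pointwise stabilizer `G_H` of a subspace `H` in `G`. -/
def pointStab (G : Subgroup (GLn F n)) (H : Submodule F (Fin n → F)) : Subgroup (GLn F n) where
  carrier := {g | g ∈ G ∧ ∀ v ∈ H, g v = v}
  one_mem' := ⟨G.one_mem, fun v _ => rfl⟩
  mul_mem' := fun {a b} ha hb => ⟨G.mul_mem ha.1 hb.1, fun v hv => by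
    show a (b v) = v
    rw [hb.2 v hv, ha.2 v hv]⟩
  inv_mem' := fun {a} ha => ⟨G.inv_mem ha.1, fun v hv => by
    show a.symm v = v
    conv_lhs => rw [← ha.2 v hv]
    exact a.symm_apply_apply v⟩

/-- `K_H`: the subgroup of `G_H` of elements of determinant one
(the transvections in `G_H` together with the identity). -/
noncomputable def KH (G : Subgroup (GLn F n)) (H : Submodule F (Fin n → F)) :
    Subgroup (GLn F n) :=
  pointStab G H ⊓ MonoidHom.ker LinearEquiv.det

/-- `e_H = |G_H : K_H|`. -/
noncomputable def eH (G : Subgroup (GLn F n)) (H : Submodule F (Fin n → F)) : ℕ :=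
  ((KH G H).subgroupOf (pointStab G H)).index

/-- The transvection root space of `G_H`: the span of the root vectors of the
transvections in `G_H` (the root vector of `t` spans the range of `t - 1`). -/
noncomputable def trvSpace (G : Subgroup (GLn F n)) (H : Submodule F (Fin n → F)) :
    Submodule F (Fin n → F) :=
  ⨆ g ∈ {g : GLn F n | g ∈ pointStab G H ∧ IsTransvection g},
    LinearMap.range (g.toLinearMap - LinearMap.id)

/-- `b_H`: the dimension of the transvection root space of `G_H`. -/
noncomputable def bH (G : Subgroup (GLn F n)) (H : Submodule F (Fin n → F)) : ℕ :=
  Module.finrank F (trvSpace G H)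


lemma aux_X_dvd {F : Type*} [CommRing F] {N : Type*} [DecidableEq N]
    (i0 : N) (f : MvPolynomial N F)
    (h : aeval (fun k => if k = i0 then (0 : MvPolynomial N F) else X k) f = 0) :
    X i0 ∣ f := by
  classical
  set g : N → MvPolynomial N F := fun k => if k = i0 then 0 else X k with hg
  have hf : f = ∑ m ∈ f.support, monomial m (coeff m f) := (support_sum_monomial_coeff f).symm
  have key : ∀ m : N →₀ ℕ, ∀ c : F,
      aeval g (monomial m c) = if m i0 = 0 then monomial m c else 0 := by
    intro m c
    rw [aeval_monomial]
    split_ifs with h0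
    · rw [monomial_eq]
      congr 1
      refine Finsupp.prod_congr fun j hj => ?_
      have hji : j ≠ i0 := by
        intro he; exact Finsupp.mem_support_iff.mp hj (he ▸ h0)
      simp [hg, hji]
    · have hi0 : i0 ∈ m.support := Finsupp.mem_support_iff.mpr h0
      rw [Finsupp.prod, Finset.prod_eq_zero hi0 (by simp [hg, zero_pow h0]), mul_zero]
  have hsum : aeval g f = ∑ m ∈ f.support.filter (fun m => m i0 = 0), monomial m (coeff m f) := by
    conv_lhs => rw [hf, map_sum]
    rw [Finset.sum_filter]
    exact Finset.sum_congr rfl fun m _ => key m _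
  rw [h] at hsum
  have hrw : f = ∑ m ∈ f.support.filter (fun m => ¬ m i0 = 0), monomial m (coeff m f) := by
    conv_lhs => rw [hf]
    rw [← Finset.sum_filter_add_sum_filter_not f.support (fun m => m i0 = 0), ← hsum, zero_add]
  rw [hrw]
  exact Finset.dvd_sum fun m hm => X_dvd_monomial.mpr (Or.inr ((Finset.mem_filter.mp hm).2))

/-- let `G_H` be a group of reflections about the hyperplane
`H = ker z_n` (here `V = F^{n+1}`, `z`'s the standard dual basis, `l_H = z_n` the last
coordinate), with `v_i = e_i` for `i < b` root vectors of transvections in `K_H`.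
If `μ = ∑_I u_I dz_I` is invariant under `K_H` (the determinant-one part of `G_H`)
and `J` meets `{0,…,b-1}` and omits the last index, then `l_H ∣ u_J`. -/
theorem stmt5 {F : Type*} [Field F] (h2 : ringChar F ≠ 2) {n : ℕ} (b : ℕ) (hb : b ≤ n)
    (GH : Subgroup (GLn F (n + 1)))
    (hfix : ∀ g ∈ GH, ∀ v : Fin (n + 1) → F, v (Fin.last n) = 0 → g v = v)
    (hrefl : ∀ g ∈ GH, g ≠ 1 → IsReflection g)
    (htr : ∀ i : Fin (n + 1), (i : ℕ) < b →
      ∃ t ∈ GH, ∀ v : Fin (n + 1) → F, t v = v + v (Fin.last n) • (Pi.single i 1 : Fin (n + 1) → F))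
    (u : Finset (Fin (n + 1)) → MvPolynomial (Fin (n + 1)) F)
    (hinv : ∀ g ∈ GH, LinearMap.det g.toLinearMap = 1 → formAct g u = u)
    (J : Finset (Fin (n + 1))) (hJb : ∃ i ∈ J, (i : ℕ) < b) (hJn : Fin.last n ∉ J) :
    X (Fin.last n) ∣ u J := by
  classical
  obtain ⟨i, hiJ, hib⟩ := hJb
  obtain ⟨t, htG, htv⟩ := htr i hib
  have hiν : i ≠ Fin.last n := by
    intro h
    rw [h] at hib
    simp only [Fin.val_last] at hib
    omega
  -- the root vector vanishes at the last coordinate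
  have hsν : (Pi.single i 1 : Fin (n+1) → F) (Fin.last n) = 0 := by
    rw [Pi.single_apply, if_neg (Ne.symm hiν)]
  -- formula for actMat t
  have hact : ∀ a j : Fin (n+1), actMat t a j =
      (if a = j then (1:F) else 0) - (if a = i ∧ j = Fin.last n then 1 else 0) := by
    intro a j
    have key : t ((Pi.single j 1 : Fin (n+1) → F) -
        ((Pi.single j 1 : Fin (n+1) → F) (Fin.last n)) • (Pi.single i 1 : Fin (n+1) → F))
        = Pi.single j 1 := by
      rw [htv]
      have hx : ((Pi.single j 1 : Fin (n+1) → F) -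
          ((Pi.single j 1 : Fin (n+1) → F) (Fin.last n)) • (Pi.single i 1 : Fin (n+1) → F))
          (Fin.last n) = (Pi.single j 1 : Fin (n+1) → F) (Fin.last n) := by
        simp [hsν]
      rw [hx, sub_add_cancel]
    have hsymm : t.symm (Pi.single j 1) =
        (Pi.single j 1 : Fin (n+1) → F) -
          ((Pi.single j 1 : Fin (n+1) → F) (Fin.last n)) • (Pi.single i 1 : Fin (n+1) → F) :=
      (LinearEquiv.symm_apply_eq t).mpr key.symm
    have : actMat t a j = t.symm (Pi.single j 1) a := rfl
    rw [this, hsymm]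
    simp only [Pi.sub_apply, Pi.smul_apply, smul_eq_mul, Pi.single_apply]
    by_cases hai : a = i
    · by_cases hjν : j = Fin.last n
      · subst hai; subst hjν; simp [hiν]
      · have : ¬ Fin.last n = j := fun h => hjν h.symm
        simp [hai, hjν, this]
    · simp [hai]
  -- determinant of t is 1
  have hdet : LinearMap.det (t : (Fin (n+1) → F) ≃ₗ[F] (Fin (n+1) → F)).toLinearMap = 1 := by
    rw [← LinearMap.det_toMatrix']
    have hM : LinearMap.toMatrix' (t : (Fin (n+1) → F) ≃ₗ[F] (Fin (n+1) → F)).toLinearMap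
        = Matrix.transvection i (Fin.last n) (1 : F) := by
      ext a c
      rw [LinearMap.toMatrix'_apply]
      have hfun : (fun j' : Fin (n+1) => if j' = c then (1:F) else 0) = Pi.single c 1 := by
        funext j'; rw [Pi.single_apply]
      show t (Pi.single c 1) a = _
      have : (t : (Fin (n+1) → F) ≃ₗ[F] (Fin (n+1) → F)).toLinearMap (Pi.single c 1)
          = t (Pi.single c 1) := rfl
      rw [htv]
      simp only [Matrix.transvection, Matrix.add_apply, Matrix.one_apply, Pi.add_apply,
        Pi.smul_apply, smul_eq_mul, Pi.single_apply, Matrix.single, Matrix.of_apply]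
      by_cases hai : a = i
      · by_cases hcν : c = Fin.last n
        · subst hai; subst hcν; simp [hiν]
        · have : ¬ Fin.last n = c := fun h => hcν h.symm
          simp [hai, hcν, this]
      · have : ¬ i = a := fun h => hai h.symm
        simp [hai, this]
    rw [hM, Matrix.det_transvection_of_ne i (Fin.last n) hiν 1]
  -- setting X (last) to zero
  set g : Fin (n+1) → MvPolynomial (Fin (n+1)) F :=
    fun k => if k = Fin.last n then 0 else X k with hg
  have hφσ : ∀ f : MvPolynomial (Fin (n+1)) F, aeval g (polyAct t f) = aeval g f := by
    have hcomp : (aeval g).comp (polyAct t) = aeval g := by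
      apply MvPolynomial.algHom_ext
      intro a
      simp only [AlgHom.comp_apply, polyAct, aeval_X]
      rw [map_sum]
      rw [Finset.sum_eq_single a]
      · rw [map_mul, aeval_X, aeval_C, hact]
        have : ¬ (a = i ∧ a = Fin.last n) := by
          rintro ⟨h1, h2⟩; exact hiν (h1 ▸ h2)
        rw [if_pos rfl, if_neg this, sub_zero, map_one, one_mul]
      · intro j _ hja
        rw [map_mul, aeval_X, aeval_C]
        by_cases hjν : j = Fin.last n
        · have : g j = 0 := by rw [hjν, hg]; simp
          rw [this, mul_zero]
        · have h0 : actMat t a j = 0 := by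
            rw [hact, if_neg (fun h => hja h.symm), if_neg (fun h => hjν h.2), sub_zero]
          rw [h0, map_zero, zero_mul]
      · intro h; exact absurd (Finset.mem_univ a) h
    intro f
    exact congrFun (congrArg DFunLike.coe hcomp) f
  -- the companion index set J'
  set J' : Finset (Fin (n+1)) := insert (Fin.last n) (J.erase i) with hJ'def
  have hνJ' : Fin.last n ∈ J' := Finset.mem_insert_self _ _
  have hνe : Fin.last n ∉ J.erase i := fun h => hJn (Finset.mem_of_mem_erase h)
  have hiJ' : i ∉ J' := by
    intro h
    rcases Finset.mem_insert.mp h with h | h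
    · exact hiν h
    · exact (Finset.notMem_erase i J) h
  have hJcard : J'.card = J.card := by
    rw [hJ'def, Finset.card_insert_of_notMem hνe, Finset.card_erase_of_mem hiJ]
    have : 1 ≤ J.card := Finset.card_pos.mpr ⟨i, hiJ⟩
    omega
  have hJJ' : J ≠ J' := fun h => hJn (h ▸ hνJ')
  have hmem : ∀ x ∈ J, x ≠ i → x ∈ J' := fun x hx hxi =>
    Finset.mem_insert_of_mem (Finset.mem_erase.mpr ⟨hxi, hx⟩)
  have hmem' : ∀ x ∈ J', x ≠ Fin.last n → x ∈ J ∧ x ≠ i := by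
    intro x hx hxν
    rcases Finset.mem_insert.mp hx with h | h
    · exact absurd h hxν
    · exact ⟨Finset.mem_of_mem_erase h, (Finset.mem_erase.mp h).1⟩
  -- minor at (J', J') is 1
  have hminor_self : minorDet t J' J' = 1 := by
    have hone : (Matrix.of fun a b : Fin J'.card =>
        actMat t (J'.orderIsoOfFin rfl a : Fin (n+1)) (J'.orderIsoOfFin rfl b : Fin (n+1))) = 1 := by
      ext a b
      rw [Matrix.of_apply, hact, Matrix.one_apply]
      have hnot : ¬ ((J'.orderIsoOfFin rfl a : Fin (n+1)) = i ∧
          (J'.orderIsoOfFin rfl b : Fin (n+1)) = Fin.last n) := by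
        rintro ⟨h1, -⟩
        exact hiJ' (by rw [← h1]; exact (J'.orderIsoOfFin rfl a).2)
      rw [if_neg hnot, sub_zero]
      by_cases hab : a = b
      · subst hab; rw [if_pos rfl, if_pos rfl]
      · have : ¬ ((J'.orderIsoOfFin rfl a : Fin (n+1)) = (J'.orderIsoOfFin rfl b : Fin (n+1))) :=
          fun h => hab ((J'.orderIsoOfFin rfl).injective (Subtype.coe_injective h))
        rw [if_neg this, if_neg hab]
    unfold minorDet
    rw [dif_pos rfl]
    exact (congrArg Matrix.det hone).trans Matrix.det_one
  -- minor at (J, J') is nonzero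
  have hε : minorDet t J J' ≠ 0 := by
    have key : (Matrix.of fun a b : Fin J.card =>
        actMat t (J.orderIsoOfFin rfl a : Fin (n+1))
          (J'.orderIsoOfFin hJcard b : Fin (n+1))).det ≠ 0 := by
      set e1 := J.orderIsoOfFin (rfl : J.card = J.card) with he1
      set e2 := J'.orderIsoOfFin hJcard with he2
      set N := Matrix.of fun a b : Fin J.card =>
        actMat t (e1 a : Fin (n+1)) (e2 b : Fin (n+1)) with hNdef
      set fv : Fin J.card → Fin (n+1) :=
        fun a => if (e1 a : Fin (n+1)) = i then Fin.last n else (e1 a : Fin (n+1)) with hfv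
      have hfvmem : ∀ a, fv a ∈ J' := by
        intro a
        rw [hfv]
        dsimp only
        split_ifs with h
        · exact hνJ'
        · exact hmem _ (e1 a).2 h
      have hfvinj : ∀ a c, fv a = fv c → a = c := by
        intro a c h
        rw [hfv] at h
        dsimp only at h
        by_cases ha : (e1 a : Fin (n+1)) = i <;> by_cases hc : (e1 c : Fin (n+1)) = i
        · exact e1.injective (Subtype.coe_injective (ha.trans hc.symm))
        · rw [if_pos ha, if_neg hc] at h
          exact absurd (by rw [h]; exact (e1 c).2) hJn
        · rw [if_neg ha, if_pos hc] at h
          exact absurd (by rw [← h]; exact (e1 a).2) hJn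
        · rw [if_neg ha, if_neg hc] at h
          exact e1.injective (Subtype.coe_injective h)
      have hN : ∀ a b, N a b =
          (if (e1 a : Fin (n+1)) = i then (-1:F) else 1) *
          (if (e2 b : Fin (n+1)) = fv a then 1 else 0) := by
        intro a b
        rw [hNdef]
        rw [Matrix.of_apply, hact, hfv]
        dsimp only
        by_cases ha : (e1 a : Fin (n+1)) = i
        · simp only [if_pos ha]
          have h1 : ¬ (e1 a : Fin (n+1)) = (e2 b : Fin (n+1)) := by
            intro h
            exact hiJ' (by rw [← ha, h]; exact (e2 b).2)
          rw [if_neg h1]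
          by_cases hb : (e2 b : Fin (n+1)) = Fin.last n
          · rw [if_pos ⟨ha, hb⟩, if_pos hb]; ring
          · rw [if_neg (fun h => hb h.2), if_neg hb]; ring
        · have hand : ¬ ((e1 a : Fin (n+1)) = i ∧ (e2 b : Fin (n+1)) = Fin.last n) :=
            fun h => ha h.1
          simp only [if_neg ha]
          rw [if_neg hand, sub_zero, one_mul]
          by_cases hab : (e1 a : Fin (n+1)) = (e2 b : Fin (n+1))
          · rw [if_pos hab, if_pos hab.symm]
          · rw [if_neg hab, if_neg (fun h => hab h.symm)]
      have hNNT : N * N.transpose = 1 := by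
        ext a c
        rw [Matrix.mul_apply, Matrix.one_apply]
        by_cases hac : a = c
        · subst hac
          rw [if_pos rfl]
          rw [Finset.sum_eq_single (e2.symm ⟨fv a, hfvmem a⟩)]
          · rw [Matrix.transpose_apply, hN]
            have h1 : (e2 (e2.symm ⟨fv a, hfvmem a⟩) : Fin (n+1)) = fv a := by
              rw [OrderIso.apply_symm_apply]
            rw [h1, if_pos rfl, mul_one]
            split_ifs <;> norm_num
          · intro b _ hb
            rw [Matrix.transpose_apply, hN]
            have h1 : ¬ (e2 b : Fin (n+1)) = fv a := by
              intro h
              apply hb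
              have hsub : e2 b = ⟨fv a, hfvmem a⟩ := Subtype.ext h
              rw [← hsub, OrderIso.symm_apply_apply]
            rw [if_neg h1, mul_zero, zero_mul]
          · intro h; exact absurd (Finset.mem_univ _) h
        · rw [if_neg hac]
          apply Finset.sum_eq_zero
          intro b _
          rw [Matrix.transpose_apply, hN, hN]
          by_cases h1 : (e2 b : Fin (n+1)) = fv a
          · have h2 : ¬ (e2 b : Fin (n+1)) = fv c :=
              fun h => hac (hfvinj a c (h1.symm.trans h))
            rw [if_neg h2, mul_zero, mul_zero]
          · rw [if_neg h1, mul_zero, zero_mul]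
      exact (Matrix.isUnit_det_of_right_inverse hNNT).ne_zero
    unfold minorDet
    rw [dif_pos hJcard]
    exact key
  -- all other minors vanish
  have hzero : ∀ I : Finset (Fin (n+1)), I ≠ J' → I ≠ J → minorDet t I J' = 0 := by
    intro I hIJ' hIJ
    have key : ∀ hc : J'.card = I.card, (Matrix.of fun a b : Fin I.card =>
        actMat t (I.orderIsoOfFin rfl a : Fin (n+1))
          (J'.orderIsoOfFin hc b : Fin (n+1))).det = 0 := by
      intro hc
      set e1 := I.orderIsoOfFin (rfl : I.card = I.card) with he1
      set e2 := J'.orderIsoOfFin hc with he2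
      set N := Matrix.of fun a b : Fin I.card =>
        actMat t (e1 a : Fin (n+1)) (e2 b : Fin (n+1)) with hNdef
      have hrow : ∀ x, ∀ hx : x ∈ I, x ∉ J' → x ≠ i → N.det = 0 := by
        intro x hx hxJ' hxi
        apply Matrix.det_eq_zero_of_row_eq_zero (e1.symm ⟨x, hx⟩)
        intro b
        rw [hNdef, Matrix.of_apply, hact]
        have h1 : (e1 (e1.symm ⟨x, hx⟩) : Fin (n+1)) = x := by
          rw [OrderIso.apply_symm_apply]
        rw [h1]
        rw [if_neg (fun h => hxJ' (by rw [h]; exact (e2 b).2)),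
          if_neg (fun h => hxi h.1), sub_zero]
      by_cases hiI : i ∈ I
      · by_cases hνI : Fin.last n ∈ I
        · -- row at i is the negative of the row at ν
          set a0 := e1.symm ⟨i, hiI⟩ with ha0
          set a1 := e1.symm ⟨Fin.last n, hνI⟩ with ha1
          have h0 : (e1 a0 : Fin (n+1)) = i := by rw [ha0, OrderIso.apply_symm_apply]
          have h1 : (e1 a1 : Fin (n+1)) = Fin.last n := by rw [ha1, OrderIso.apply_symm_apply]
          have ha01 : a0 ≠ a1 := by
            intro h
            exact hiν (by rw [← h0, h, h1])
          have hrow0 : N a0 = (-1 : F) • N a1 := by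
            funext b
            rw [Pi.smul_apply, smul_eq_mul]
            have e0 : N a0 b = actMat t (e1 a0 : Fin (n+1)) (e2 b : Fin (n+1)) := rfl
            have e1b : N a1 b = actMat t (e1 a1 : Fin (n+1)) (e2 b : Fin (n+1)) := rfl
            rw [e0, e1b, h0, h1, hact, hact]
            have hi2 : ¬ (i : Fin (n+1)) = (e2 b : Fin (n+1)) :=
              fun h => hiJ' (by rw [h]; exact (e2 b).2)
            have hl2 : ¬ (Fin.last n = i ∧ (e2 b : Fin (n+1)) = Fin.last n) :=
              fun h => hiν h.1.symm
            by_cases hb : (e2 b : Fin (n+1)) = Fin.last n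
            · rw [if_neg hi2, if_pos ⟨rfl, hb⟩, if_pos (by rw [hb]), if_neg hl2]; ring
            · rw [if_neg hi2, if_neg (fun h => hb h.2), if_neg hl2,
                if_neg (fun h => hb h.symm)]; ring
          calc N.det = (Matrix.updateRow N a0 (N a0)).det := by rw [Matrix.updateRow_eq_self]
            _ = (Matrix.updateRow N a0 ((-1 : F) • N a1)).det := by rw [hrow0]
            _ = -1 * (Matrix.updateRow N a0 (N a1)).det :=
                Matrix.det_updateRow_smul N a0 (-1) (N a1)
            _ = 0 := by
                rw [Matrix.det_zero_of_row_eq ha01 (by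
                  rw [Matrix.updateRow_self, Matrix.updateRow_ne (Ne.symm ha01)]), mul_zero]
        · have hns : ¬ I ⊆ J := by
            intro hsub
            exact hIJ (Finset.eq_of_subset_of_card_le hsub (by rw [← hc, hJcard]))
          obtain ⟨x, hxI, hxJ⟩ := Finset.not_subset.mp hns
          have hxν : x ≠ Fin.last n := fun h => hνI (by rw [← h]; exact hxI)
          have hxi : x ≠ i := fun h => hxJ (by rw [h]; exact hiJ)
          refine hrow x hxI ?_ hxi
          intro hxJ'
          exact hxJ (hmem' x hxJ' hxν).1
      · have hns : ¬ I ⊆ J' := by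
          intro hsub
          exact hIJ' (Finset.eq_of_subset_of_card_le hsub (le_of_eq hc))
        obtain ⟨x, hxI, hxJ'⟩ := Finset.not_subset.mp hns
        exact hrow x hxI hxJ' (fun h => hiI (by rw [← h]; exact hxI))
    unfold minorDet
    split_ifs with hc
    · exact key hc
    · rfl
  -- assemble the invariance identity at J'
  have heq := congrFun (hinv t htG hdet) J'
  have hterm : ∀ I : Finset (Fin (n+1)),
      polyAct t (u I) * C (minorDet t I J') =
      (if I = J' then polyAct t (u J') * C (minorDet t J' J') else 0) +
      (if I = J then polyAct t (u J) * C (minorDet t J J') else 0) := by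
    intro I
    by_cases h1 : I = J'
    · subst h1
      rw [if_pos rfl, if_neg (fun h => hJJ' h.symm), add_zero]
    · by_cases h2 : I = J
      · subst h2
        rw [if_neg h1, if_pos rfl, zero_add]
      · rw [if_neg h1, if_neg h2, hzero I h1 h2, map_zero, mul_zero, add_zero]
  have hsum : formAct t u J' = polyAct t (u J') * C (minorDet t J' J') +
      polyAct t (u J) * C (minorDet t J J') := by
    show (∑ I : Finset (Fin (n+1)), polyAct t (u I) * C (minorDet t I J')) = _
    rw [Finset.sum_congr rfl (fun I _ => hterm I), Finset.sum_add_distrib,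
      Finset.sum_ite_eq' Finset.univ, Finset.sum_ite_eq' Finset.univ,
      if_pos (Finset.mem_univ _), if_pos (Finset.mem_univ _)]
  rw [hsum, hminor_self, map_one, mul_one] at heq
  have happ := congrArg (aeval g) heq
  rw [map_add, map_mul, hφσ, hφσ, aeval_C] at happ
  have h0 : aeval g (u J) * algebraMap F (MvPolynomial (Fin (n+1)) F) (minorDet t J J') = 0 :=
    add_eq_left.mp happ
  have hCne : algebraMap F (MvPolynomial (Fin (n+1)) F) (minorDet t J J') ≠ 0 := by
    rw [MvPolynomial.algebraMap_eq]
    intro h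
    exact hε (by simpa using h)
  have hz : aeval g (u J) = 0 := by
    rcases mul_eq_zero.mp h0 with h | h
    · exact h
    · exact absurd h hCne
  rw [hg] at hz
  exact aux_X_dvd (Fin.last n) (u J) hz
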